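/- Let μ be a finite Borel measure with compact infinite support on ℂ, M its Bergman shift Hessenberg matrix, and π_n the projection onto span{e_1,…,e_n}. Then for |z| > ‖M‖, the ratio of consecutive monic orthogonal polynomials satisfies Φ_{n−1}(z;μ)/Φ_n(z;μ) = ((z − π_n M π_n)^{−1})_{n,n} = Σ_{j=0}^∞ ((π_n M π_n)^j)_{n,n} / z^{j+1}. -/

import Mathlib

set_option maxHeartbeats 1000000
set_option synthInstance.maxHeartbeats 400000


open MeasureTheory Polynomial Filter

noncomputable section

/-- The support of a measure: points all of whose neighborhoods have positive measure. -/
def msupport (mu : Measure ℂ) : Set ℂ := {x | ∀ U ∈ nhds x, mu U ≠ 0}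

/-- `φ` is the sequence of orthonormal polynomials for `μ`, with positive leading
coefficients `κ`. -/
def IsOrthonormalPolys (mu : Measure ℂ) (φ : ℕ → Polynomial ℂ) (κ : ℕ → ℝ) : Prop :=
  (∀ n, (φ n).degree = n) ∧ (∀ n, 0 < κ n) ∧ (∀ n, (φ n).leadingCoeff = (κ n : ℂ)) ∧
  ∀ m n, (∫ z, (φ m).eval z * (starRingEnd ℂ) ((φ n).eval z) ∂mu) = if m = n then 1 else 0
lemma msupport_compl_null (mu : Measure ℂ) : mu (msupport mu)ᶜ = 0 := by
  set S : Set (Set ℂ) := {V | IsOpen V ∧ mu V = 0} with hS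
  obtain ⟨T, hTc, hTS, hTU⟩ := TopologicalSpace.isOpen_sUnion_countable S (fun s hs => hs.1)
  have hsub : (msupport mu)ᶜ ⊆ ⋃₀ S := by
    intro x hx
    simp only [msupport, Set.mem_compl_iff, Set.mem_setOf_eq, not_forall] at hx
    obtain ⟨U, hU, hU0⟩ := hx
    push_neg at hU0
    obtain ⟨V, hVU, hVo, hxV⟩ := mem_nhds_iff.1 hU
    exact ⟨V, ⟨hVo, le_antisymm (le_trans (measure_mono hVU) hU0.le) (zero_le)⟩, hxV⟩
  have : mu (⋃₀ S) = 0 := by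
    rw [← hTU, measure_sUnion_null_iff hTc]
    exact fun s hs => (hTS hs).2
  exact le_antisymm (le_trans (measure_mono hsub) this.le) (zero_le)

lemma integrable_cont (mu : Measure ℂ) [IsFiniteMeasure mu] (hcs : IsCompact (msupport mu))
    {f : ℂ → ℂ} (hf : Continuous f) : Integrable f mu := by
  obtain ⟨C, hC⟩ := hcs.exists_bound_of_continuousOn hf.continuousOn
  refine Integrable.mono' (integrable_const C) hf.aestronglyMeasurable ?_
  have h0 : mu {x | ¬ ‖f x‖ ≤ C} ≤ mu (msupport mu)ᶜ := by
    apply measure_mono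
    intro x hx
    simp only [Set.mem_setOf_eq] at hx
    exact fun hm => hx (hC x hm)
  exact le_antisymm (le_trans h0 (msupport_compl_null mu).le) (zero_le)


def ip (mu : Measure ℂ) (p q : Polynomial ℂ) : ℂ :=
  ∫ z, p.eval z * (starRingEnd ℂ) (q.eval z) ∂mu

section aux
variable (mu : Measure ℂ) [IsFiniteMeasure mu] (hcs : IsCompact (msupport mu))
include hcs

lemma integrable_pq (p q : Polynomial ℂ) :
    Integrable (fun z => p.eval z * (starRingEnd ℂ) (q.eval z)) mu :=
  integrable_cont mu hcs (p.continuous.mul (continuous_star.comp q.continuous))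

lemma ip_sum_left (s : Finset ℕ) (f : ℕ → Polynomial ℂ) (r : Polynomial ℂ) :
    ip mu (∑ i ∈ s, f i) r = ∑ i ∈ s, ip mu (f i) r := by
  unfold ip
  rw [← integral_finset_sum s (fun i _ => integrable_pq mu hcs (f i) r)]
  congr 1; ext z; simp [eval_finset_sum, Finset.sum_mul]

omit hcs in
lemma ip_C_mul_left (a : ℂ) (p r : Polynomial ℂ) : ip mu (C a * p) r = a * ip mu p r := by
  unfold ip
  rw [← integral_const_mul]
  congr 1; ext z; simp; ring

lemma ip_sub_left (p q r : Polynomial ℂ) : ip mu (p - q) r = ip mu p r - ip mu q r := by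
  unfold ip
  rw [← integral_sub (integrable_pq mu hcs p r) (integrable_pq mu hcs q r)]
  congr 1; ext z; simp [sub_mul]

variable (φ : ℕ → Polynomial ℂ) (κ : ℕ → ℝ) (hON : IsOrthonormalPolys mu φ κ)
include hON

omit hcs in
lemma phi_coeff_self (m : ℕ) : (φ m).coeff m = (κ m : ℂ) := by
  have h := hON.2.2.1 m
  have hd : (φ m).natDegree = m := natDegree_eq_of_degree_eq_some (hON.1 m)
  rwa [Polynomial.leadingCoeff, hd] at h

lemma expand (m : ℕ) : ∀ p : Polynomial ℂ, p.degree < (m : ℕ) →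
    p = ∑ i ∈ Finset.range m, C (ip mu p (φ i)) * φ i := by
  induction m with
  | zero =>
    intro p hp
    have : p = 0 := by
      rw [← degree_eq_bot]
      exact Nat.WithBot.lt_zero_iff.1 (by exact_mod_cast hp)
    simp [this]
  | succ m ih =>
    intro p hp
    have hκ : (κ m : ℂ) ≠ 0 := by exact_mod_cast (hON.2.1 m).ne'
    set c : ℂ := p.coeff m / (κ m : ℂ) with hc
    set q : Polynomial ℂ := p - C c * φ m with hqdef
    have hqd : q.degree < (m : ℕ) := by
      rw [degree_lt_iff_coeff_zero]
      intro m' hm'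
      rcases eq_or_lt_of_le hm' with h | h
      · simp only [hqdef, coeff_sub, coeff_C_mul, ← h, phi_coeff_self mu φ κ hON, hc]
        field_simp
        ring
      · have h1 : p.coeff m' = 0 := coeff_eq_zero_of_degree_lt
          (lt_of_lt_of_le hp (by exact_mod_cast h))
        have h2 : (φ m).coeff m' = 0 := coeff_eq_zero_of_degree_lt
          (by rw [hON.1 m]; exact_mod_cast h)
        simp [hqdef, h1, h2]
    have hq := ih q hqd
    have hipφ : ∀ i j : ℕ, ip mu (φ i) (φ j) = if i = j then 1 else 0 := hON.2.2.2
    have hqi : ∀ i, i ≠ m → ip mu q (φ i) = ip mu p (φ i) := by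
      intro i hi
      rw [hqdef, ip_sub_left mu hcs, ip_C_mul_left mu, hipφ m i, if_neg (fun h => hi h.symm)]
      ring
    have hqm : ip mu q (φ m) = 0 := by
      rw [hq, ip_sum_left mu hcs]
      apply Finset.sum_eq_zero
      intro i hi
      rw [ip_C_mul_left mu, hipφ i m, if_neg (Finset.mem_range.1 hi).ne]
      ring
    have hpm : ip mu p (φ m) = c := by
      have h' : ip mu q (φ m) = ip mu p (φ m) - c * ip mu (φ m) (φ m) := by
        rw [hqdef, ip_sub_left mu hcs, ip_C_mul_left mu]
      rw [h', hipφ m m, if_pos rfl, mul_one, sub_eq_zero] at hqm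
      exact hqm
    rw [Finset.sum_range_succ, hpm]
    calc p = q + C c * φ m := by rw [hqdef]; ring
    _ = _ := by
      rw [hq]
      congr 1
      apply Finset.sum_congr rfl
      intro i hi
      rw [hqi i (Finset.mem_range.1 hi).ne]

lemma ip_lt_zero {p : Polynomial ℂ} {i : ℕ} (hp : p.degree < (i : ℕ)) : ip mu p (φ i) = 0 := by
  rw [expand mu hcs φ κ hON i p hp, ip_sum_left mu hcs]
  apply Finset.sum_eq_zero
  intro l hl
  have hipφ : ∀ a b : ℕ, ip mu (φ a) (φ b) = if a = b then 1 else 0 := hON.2.2.2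
  rw [ip_C_mul_left mu, hipφ l i, if_neg (Finset.mem_range.1 hl).ne]
  ring

omit hcs in
lemma deg_X_mul (j : ℕ) : (X * φ j).degree = ((j + 1 : ℕ) : WithBot ℕ) := by
  rw [degree_mul, degree_X, hON.1 j]
  norm_cast
  omega

lemma recur (j : ℕ) : X * φ j = ∑ i ∈ Finset.range (j+2), C (ip mu (X * φ j) (φ i)) * φ i :=
  expand mu hcs φ κ hON (j+2) _ (by rw [deg_X_mul mu φ κ hON]; exact_mod_cast by omega)

lemma ip_X_mul_zero {i j : ℕ} (h : j + 1 < i) : ip mu (X * φ j) (φ i) = 0 :=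
  ip_lt_zero mu hcs φ κ hON (by rw [deg_X_mul mu φ κ hON]; exact_mod_cast h)

lemma ip_top (j : ℕ) : ip mu (X * φ j) (φ (j+1)) = (κ j : ℂ) / (κ (j+1) : ℂ) := by
  have h := congrArg (fun p => Polynomial.coeff p (j+1)) (recur mu hcs φ κ hON j)
  simp only [coeff_X_mul, finset_sum_coeff, coeff_C_mul] at h
  rw [phi_coeff_self mu φ κ hON j] at h
  rw [Finset.sum_eq_single (j+1)] at h
  · rw [phi_coeff_self mu φ κ hON (j+1)] at h
    have hκ : ((κ (j+1) : ℂ)) ≠ 0 := by exact_mod_cast (hON.2.1 (j+1)).ne'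
    rw [eq_div_iff hκ]
    exact h.symm
  · intro i hi hine
    have hi' := Finset.mem_range.1 hi
    rw [coeff_eq_zero_of_degree_lt, mul_zero]
    rw [hON.1 i]
    exact_mod_cast (by omega : i < j + 1)
  · intro hnot
    exact absurd (Finset.self_mem_range_succ (j+1)) (by simpa using hnot)

lemma recur_eval (z : ℂ) (j : ℕ) :
    z * (φ j).eval z = ∑ i ∈ Finset.range (j+2), ip mu (X * φ j) (φ i) * (φ i).eval z := by
  have h := congrArg (eval z) (recur mu hcs φ κ hON j)
  simpa [eval_finset_sum] using h
lemma vecmul_id (n : ℕ) (hn : 1 ≤ n) (z : ℂ) (j : Fin n) :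
    ∑ i : Fin n, (φ (i:ℕ)).eval z *
      ((z • (1 : Matrix (Fin n) (Fin n) ℂ)
        - Matrix.of fun a b : Fin n => ip mu (X * φ (b:ℕ)) (φ (a:ℕ))) i j)
    = ((κ (n-1) : ℂ) / (κ n : ℂ) * (φ n).eval z)
      * (if (j:ℕ) = n - 1 then 1 else 0) := by
  have hsum1 : ∑ i : Fin n, (φ (i:ℕ)).eval z * (z • (1 : Matrix (Fin n) (Fin n) ℂ)) i j
      = z * (φ (j:ℕ)).eval z := by
    rw [Finset.sum_eq_single j]
    · simp [Matrix.one_apply]; ring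
    · intro i _ hij
      simp [Matrix.one_apply, hij]
    · simp
  have hS : ∑ i : Fin n, (φ (i:ℕ)).eval z * (Matrix.of fun a b : Fin n =>
        ip mu (X * φ (b:ℕ)) (φ (a:ℕ))) i j
      = ∑ i ∈ Finset.range n, ip mu (X * φ (j:ℕ)) (φ i) * (φ i).eval z := by
    rw [Finset.sum_range fun i => ip mu (X * φ (j:ℕ)) (φ i) * (φ i).eval z]
    apply Finset.sum_congr rfl
    intro i _
    simp [Matrix.of_apply]
    ring
  have hrec := recur_eval mu hcs φ κ hON z (j:ℕ)
  have hsplit : ∑ i : Fin n, (φ (i:ℕ)).eval z *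
      ((z • (1 : Matrix (Fin n) (Fin n) ℂ)
        - Matrix.of fun a b : Fin n => ip mu (X * φ (b:ℕ)) (φ (a:ℕ))) i j)
      = z * (φ (j:ℕ)).eval z
        - ∑ i ∈ Finset.range n, ip mu (X * φ (j:ℕ)) (φ i) * (φ i).eval z := by
    rw [← hsum1, ← hS, ← Finset.sum_sub_distrib]
    apply Finset.sum_congr rfl
    intro i _
    rw [Matrix.sub_apply, mul_sub]
  rw [hsplit]
  by_cases hj : (j : ℕ) = n - 1
  · rw [if_pos hj]
    have hj2 : (j : ℕ) + 2 = n + 1 := by omega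
    rw [hj2] at hrec
    rw [Finset.sum_range_succ] at hrec
    have htop : ip mu (X * φ (j:ℕ)) (φ n) = (κ (n-1) : ℂ) / (κ n : ℂ) := by
      have h := ip_top mu hcs φ κ hON (n-1)
      rw [show (n-1) + 1 = n from by omega] at h
      rw [hj]
      exact h
    rw [htop] at hrec
    rw [hrec]
    ring
  · rw [if_neg hj]
    have hj2 : (j : ℕ) + 2 ≤ n := by omega
    have hzero : ∑ i ∈ Finset.range n, ip mu (X * φ (j:ℕ)) (φ i) * (φ i).eval z
        = ∑ i ∈ Finset.range ((j:ℕ)+2), ip mu (X * φ (j:ℕ)) (φ i) * (φ i).eval z := by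
      symm
      apply Finset.sum_subset (Finset.range_subset_range.2 hj2)
      intro i _ hnot
      rw [ip_X_mul_zero mu hcs φ κ hON (by
        have := Finset.mem_range.not.1 hnot
        omega)]
      ring
    rw [hzero, ← hrec]
    ring
end aux
lemma eucl_norm_sq (n : ℕ) (v : EuclideanSpace ℂ (Fin n)) : ‖v‖ ^ 2 = ∑ i, ‖v i‖ ^ 2 := by
  rw [EuclideanSpace.norm_eq, Real.sq_sqrt]
  positivity

lemma rpow_two_eq (x : ℝ) : x ^ (2:ℝ) = x ^ (2:ℕ) := by
  rw [← Real.rpow_natCast x 2]; norm_num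

lemma opnorm_compression (M : lp (fun _ : ℕ => ℂ) 2 →L[ℂ] lp (fun _ : ℕ => ℂ) 2) (n : ℕ)
    (A : Matrix (Fin n) (Fin n) ℂ) (hA : ∀ i j : Fin n, A i j = M (lp.single 2 (j:ℕ) 1) (i:ℕ)) :
    ‖Matrix.toEuclideanCLM (𝕜 := ℂ) A‖ ≤ ‖M‖ := by
  refine ContinuousLinearMap.opNorm_le_bound _ (norm_nonneg M) ?_
  intro x
  set g : ℕ → ℂ := fun j => if h : j < n then x ⟨j, h⟩ else 0 with hg
  set y : lp (fun _ : ℕ => ℂ) 2 := ∑ j ∈ Finset.range n, lp.single 2 j (g j) with hy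
  have hyx : ‖y‖ = ‖x‖ := by
    have h1 : ‖y‖ ^ (2:ℝ) = ∑ j ∈ Finset.range n, ‖g j‖ ^ (2:ℝ) := by
      have := lp.norm_sum_single (p := 2) (E := fun _ : ℕ => ℂ) (by norm_num) g (Finset.range n)
      simpa using this
    have h2 : ∑ j ∈ Finset.range n, ‖g j‖ ^ (2:ℝ) = ‖x‖ ^ (2:ℝ) := by
      rw [rpow_two_eq ‖x‖, eucl_norm_sq, Finset.sum_range fun j => ‖g j‖ ^ (2:ℝ)]
      apply Finset.sum_congr rfl
      intro j _
      rw [rpow_two_eq]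
      congr 2
      simp [hg]
    have h3 := h1.trans h2
    rw [rpow_two_eq, rpow_two_eq] at h3
    have := congrArg Real.sqrt h3
    rwa [Real.sqrt_sq (norm_nonneg _), Real.sqrt_sq (norm_nonneg _)] at this
  -- coordinates of M y
  have hMy : ∀ i : Fin n, (Matrix.toEuclideanCLM (𝕜 := ℂ) A) x i = (M y) (i : ℕ) := by
    intro i
    have h4 : M y = ∑ j ∈ Finset.range n, g j • M (lp.single 2 j 1) := by
      rw [hy, map_sum]
      apply Finset.sum_congr rfl
      intro j _
      rw [← _root_.map_smul]
      congr 1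
      rw [← lp.single_smul]
      congr 1
      simp
    have h5 : (M y) (i : ℕ) = ∑ j ∈ Finset.range n, g j * (M (lp.single 2 j 1)) (i : ℕ) := by
      rw [h4]
      induction (Finset.range n) using Finset.induction with
      | empty => simp
      | insert _ _ hnotmem ih =>
        rw [Finset.sum_insert hnotmem, Finset.sum_insert hnotmem, lp.coeFn_add, Pi.add_apply,
          lp.coeFn_smul, Pi.smul_apply, ih]
        simp
    rw [h5, Finset.sum_range fun j => g j * (M (lp.single 2 j 1)) (i : ℕ)]
    show ∑ j, A i j * x j = _
    apply Finset.sum_congr rfl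
    intro j _
    rw [hA i j]
    have : g (j : ℕ) = x j := by simp [hg]
    rw [this]
    ring
  -- norm bound
  have hn2 : ‖(Matrix.toEuclideanCLM (𝕜 := ℂ) A) x‖ ^ 2 ≤ (‖M‖ * ‖x‖) ^ 2 := by
    rw [eucl_norm_sq]
    calc ∑ i, ‖(Matrix.toEuclideanCLM (𝕜 := ℂ) A) x i‖ ^ 2
        = ∑ i ∈ Finset.range n, ‖(M y) i‖ ^ 2 := by
          rw [Finset.sum_range fun i => ‖(M y) i‖ ^ 2]
          apply Finset.sum_congr rfl
          intro i _
          rw [hMy i]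
      _ ≤ ‖M y‖ ^ 2 := by
          have := lp.sum_rpow_le_norm_rpow (p := 2) (E := fun _ : ℕ => ℂ) (by norm_num)
            (M y) (Finset.range n)
          simp only [ENNReal.toReal_ofNat] at this
          simpa [rpow_two_eq] using this
      _ ≤ (‖M‖ * ‖x‖) ^ 2 := by
          rw [← hyx]
          have h6 : ‖M y‖ ≤ ‖M‖ * ‖y‖ := M.le_opNorm y
          exact pow_le_pow_left₀ (norm_nonneg _) h6 2
  calc ‖(Matrix.toEuclideanCLM (𝕜 := ℂ) A) x‖
      = Real.sqrt (‖(Matrix.toEuclideanCLM (𝕜 := ℂ) A) x‖ ^ 2) := (Real.sqrt_sq (norm_nonneg _)).symm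
    _ ≤ Real.sqrt ((‖M‖ * ‖x‖) ^ 2) := Real.sqrt_le_sqrt hn2
    _ = ‖M‖ * ‖x‖ := Real.sqrt_sq (by positivity)
lemma resolvent_entry (n : ℕ) (A : Matrix (Fin n) (Fin n) ℂ) (z : ℂ)
    (hz : ‖Matrix.toEuclideanCLM (𝕜 := ℂ) A‖ < ‖z‖) :
    IsUnit (z • (1 : Matrix (Fin n) (Fin n) ℂ) - A) ∧
    ∀ k : Fin n, ((z • (1 : Matrix (Fin n) (Fin n) ℂ) - A)⁻¹) k k
      = ∑' j : ℕ, (A ^ j) k k / z ^ (j+1) := by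
  set e := Matrix.toEuclideanCLM (n := Fin n) (𝕜 := ℂ) with he
  set T := e A with hT
  set B := z • (1 : Matrix (Fin n) (Fin n) ℂ) - A with hB
  have hz0 : z ≠ 0 := by
    intro h
    rw [h] at hz
    simp only [norm_zero] at hz
    exact absurd hz (not_lt.2 (norm_nonneg _))
  have hzpos : (0:ℝ) < ‖z‖ := lt_of_le_of_lt (norm_nonneg _) hz
  set t := z⁻¹ • T with ht
  have htn : ‖t‖ < 1 := by
    rw [ht, norm_smul z⁻¹ T, norm_inv]
    rw [← div_eq_inv_mul, div_lt_one hzpos]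
    exact hz
  have hfact : z • (1 : EuclideanSpace ℂ (Fin n) →L[ℂ] EuclideanSpace ℂ (Fin n)) - T
      = z • (1 - t) := by
    rw [smul_sub, ht, smul_smul, mul_inv_cancel₀ hz0, one_smul]
  have heB : e B = z • 1 - T := by
    rw [hB, map_sub, _root_.map_smul, map_one]
  have huCLM : IsUnit (z • (1 : EuclideanSpace ℂ (Fin n) →L[ℂ] EuclideanSpace ℂ (Fin n)) - T) := by
    rw [hfact]
    have hrepr : z • ((1:EuclideanSpace ℂ (Fin n) →L[ℂ] EuclideanSpace ℂ (Fin n)) - t)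
        = (Units.mk0 z hz0 : ℂˣ) • ((1:EuclideanSpace ℂ (Fin n) →L[ℂ] EuclideanSpace ℂ (Fin n)) - t) := rfl
    rw [hrepr, isUnit_smul_iff]
    exact isUnit_one_sub_of_norm_lt_one htn
  have hBu : IsUnit B := by
    have h1 : IsUnit (e B) := by rw [heB]; exact huCLM
    have h2 := h1.map e.symm
    simpa using h2
  refine ⟨hBu, fun k => ?_⟩
  have hdet : IsUnit B.det := (Matrix.isUnit_iff_isUnit_det B).1 hBu
  -- e B⁻¹ = Ring.inverse (e B)
  have hmul : e B * e B⁻¹ = 1 := by rw [← map_mul, Matrix.mul_nonsing_inv _ hdet, map_one]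
  have hinv : e B⁻¹ = Ring.inverse (e B) := by
    calc e B⁻¹ = 1 * e B⁻¹ := (one_mul _).symm
      _ = (Ring.inverse (e B) * e B) * e B⁻¹ := by
          rw [Ring.inverse_mul_cancel _ (by rw [heB]; exact huCLM)]
      _ = Ring.inverse (e B) * (e B * e B⁻¹) := mul_assoc _ _ _
      _ = Ring.inverse (e B) := by rw [hmul, mul_one]
  -- Neumann series
  have hG := geom_series_eq_inverse t htn
  have hcancel : (z • (1 : EuclideanSpace ℂ (Fin n) →L[ℂ] EuclideanSpace ℂ (Fin n)) - T)
      * (z⁻¹ • ∑' i : ℕ, t ^ i) = 1 := by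
    rw [hfact, smul_mul_smul_comm, mul_inv_cancel₀ hz0, mul_neg_geom_series t htn, one_smul]
  have hRinv : Ring.inverse (z • (1 : EuclideanSpace ℂ (Fin n) →L[ℂ] EuclideanSpace ℂ (Fin n)) - T)
      = z⁻¹ • ∑' i : ℕ, t ^ i := by
    calc Ring.inverse (z • 1 - T) = Ring.inverse (z • 1 - T) * ((z • 1 - T) * (z⁻¹ • ∑' i : ℕ, t ^ i)) := by
          rw [hcancel, mul_one]
      _ = (Ring.inverse (z • 1 - T) * (z • 1 - T)) * (z⁻¹ • ∑' i : ℕ, t ^ i) := (mul_assoc _ _ _).symm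
      _ = z⁻¹ • ∑' i : ℕ, t ^ i := by rw [Ring.inverse_mul_cancel _ huCLM, one_mul]
  have hsummable : Summable fun i : ℕ => t ^ i := summable_geometric_of_norm_lt_one htn
  have hseries : e B⁻¹ = ∑' j : ℕ, (z ^ (j+1))⁻¹ • e (A ^ j) := by
    rw [hinv, heB, hRinv, ← Summable.tsum_const_smul _ hsummable]
    apply tsum_congr
    intro j
    rw [ht, _root_.smul_pow, smul_smul, ← pow_succ', map_pow, inv_pow]
  -- entry extraction
  have hentry : ∀ (C : Matrix (Fin n) (Fin n) ℂ) (a b : Fin n),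
      (e C) (EuclideanSpace.single b 1) a = C a b := by
    intro C a b
    show (∑ j, C a j * (EuclideanSpace.single b (1:ℂ)) j) = C a b
    rw [Finset.sum_eq_single b]
    · simp [EuclideanSpace.single_apply]
    · intro j _ hj
      simp [EuclideanSpace.single_apply, hj]
    · simp
  have hBinv : B⁻¹ k k = (e B⁻¹) (EuclideanSpace.single k 1) k := (hentry B⁻¹ k k).symm
  rw [hBinv, hseries]
  have hsum2 : Summable fun j : ℕ => (z ^ (j+1))⁻¹ • e (A ^ j) := by
    have : (fun j : ℕ => (z ^ (j+1))⁻¹ • e (A ^ j)) = fun j : ℕ => z⁻¹ • t ^ j := by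
      funext j
      rw [ht, _root_.smul_pow, smul_smul, ← pow_succ', map_pow, inv_pow]
    rw [this]
    exact hsummable.const_smul _
  have happ := (EuclideanSpace.proj k (𝕜 := ℂ)).comp
    (ContinuousLinearMap.apply ℂ (EuclideanSpace ℂ (Fin n)) (EuclideanSpace.single k 1))
    |>.map_tsum hsum2
  rw [show ((∑' j : ℕ, (z ^ (j+1))⁻¹ • e (A ^ j)) (EuclideanSpace.single k 1)) k
      = ((EuclideanSpace.proj k (𝕜 := ℂ)).comp
        (ContinuousLinearMap.apply ℂ (EuclideanSpace ℂ (Fin n)) (EuclideanSpace.single k 1)))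
        (∑' j : ℕ, (z ^ (j+1))⁻¹ • e (A ^ j)) from rfl, happ]
  apply tsum_congr
  intro j
  show ((z ^ (j+1))⁻¹ • e (A ^ j)) (EuclideanSpace.single k 1) k = _
  rw [ContinuousLinearMap.smul_apply]
  show (z ^ (j+1))⁻¹ • ((e (A ^ j)) (EuclideanSpace.single k 1) k) = _
  rw [hentry (A ^ j) k k, smul_eq_mul, div_eq_mul_inv, mul_comm]

/-- For `|z| > ‖M‖`, the ratio of consecutive monic orthogonal polynomials equals the
(n,n) entry of the resolvent of the n-th truncation of `M`, which in turn equals the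
Neumann series `Σ_j ((π_n M π_n)^j)_{n,n} / z^{j+1}`. -/
theorem stmt16 (mu : Measure ℂ) [IsFiniteMeasure mu]
    (hcs : IsCompact (msupport mu)) (hinf : (msupport mu).Infinite)
    (φ : ℕ → Polynomial ℂ) (κ : ℕ → ℝ) (hON : IsOrthonormalPolys mu φ κ)
    (M : lp (fun _ : ℕ => ℂ) 2 →L[ℂ] lp (fun _ : ℕ => ℂ) 2)
    (hM : ∀ k j : ℕ, (M (lp.single 2 k 1)) j =
      ∫ z, z * (φ k).eval z * (starRingEnd ℂ) ((φ j).eval z) ∂mu)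
    (z : ℂ) (hz : ‖M‖ < ‖z‖) (n : ℕ) (hn : 1 ≤ n) :
    (((κ (n - 1) : ℂ))⁻¹ * (φ (n - 1)).eval z) / (((κ n : ℂ))⁻¹ * (φ n).eval z) =
        ((z • (1 : Matrix (Fin n) (Fin n) ℂ) -
            Matrix.of fun i j : Fin n =>
              ∫ w, w * (φ (j : ℕ)).eval w * (starRingEnd ℂ) ((φ (i : ℕ)).eval w) ∂mu)⁻¹)
          ⟨n - 1, by omega⟩ ⟨n - 1, by omega⟩ ∧
      (((κ (n - 1) : ℂ))⁻¹ * (φ (n - 1)).eval z) / (((κ n : ℂ))⁻¹ * (φ n).eval z) =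
        ∑' j : ℕ,
          (((Matrix.of fun i j : Fin n =>
              ∫ w, w * (φ (j : ℕ)).eval w * (starRingEnd ℂ) ((φ (i : ℕ)).eval w) ∂mu) ^ j)
            ⟨n - 1, by omega⟩ ⟨n - 1, by omega⟩) / z ^ (j + 1) := by
  set A : Matrix (Fin n) (Fin n) ℂ := Matrix.of fun i j : Fin n =>
    ∫ w, w * (φ (j : ℕ)).eval w * (starRingEnd ℂ) ((φ (i : ℕ)).eval w) ∂mu with hA
  have hAip : A = Matrix.of fun a b : Fin n => ip mu (X * φ (b:ℕ)) (φ (a:ℕ)) := by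
    ext a b
    simp [hA, ip, eval_mul]
  have hAM : ∀ i j : Fin n, A i j = (M (lp.single 2 (j:ℕ) 1)) (i:ℕ) := by
    intro i j
    rw [hM]
    rfl
  have hTle := opnorm_compression M n A hAM
  have hzT : ‖Matrix.toEuclideanCLM (𝕜 := ℂ) A‖ < ‖z‖ := lt_of_le_of_lt hTle hz
  obtain ⟨hBu, hser⟩ := resolvent_entry n A z hzT
  set B := z • (1 : Matrix (Fin n) (Fin n) ℂ) - A with hB
  set k : Fin n := ⟨n-1, by omega⟩ with hk
  have hdet : IsUnit B.det := (Matrix.isUnit_iff_isUnit_det B).1 hBu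
  have hBBinv : B * B⁻¹ = 1 := Matrix.mul_nonsing_inv B hdet
  set v : Fin n → ℂ := fun i => (φ (i:ℕ)).eval z with hv
  set c : ℂ := (κ (n-1) : ℂ) / (κ n : ℂ) with hc
  have hvB : ∀ j : Fin n, ∑ i : Fin n, v i * B i j
      = (c * (φ n).eval z) * (if (j:ℕ) = n-1 then 1 else 0) := by
    intro j
    rw [hB, hAip]
    exact vecmul_id mu hcs φ κ hON n hn z j
  have hvm : Matrix.vecMul v B
      = fun j : Fin n => (c * (φ n).eval z) * (if (j:ℕ) = n-1 then 1 else 0) := by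
    funext j
    rw [← hvB j]
    simp [Matrix.vecMul, dotProduct]
  have hveq : ∀ j : Fin n, v j = (c * (φ n).eval z) * B⁻¹ k j := by
    intro j
    have h1 : v = Matrix.vecMul (Matrix.vecMul v B) B⁻¹ := by
      rw [Matrix.vecMul_vecMul, hBBinv, Matrix.vecMul_one]
    have h2 : Matrix.vecMul (Matrix.vecMul v B) B⁻¹ j
        = ∑ i : Fin n, (Matrix.vecMul v B) i * B⁻¹ i j := by
      simp [Matrix.vecMul, dotProduct]
    calc v j = Matrix.vecMul (Matrix.vecMul v B) B⁻¹ j := by rw [← h1]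
      _ = ∑ i : Fin n, (Matrix.vecMul v B) i * B⁻¹ i j := h2
      _ = (c * (φ n).eval z) * B⁻¹ k j := by
          rw [hvm, Finset.sum_eq_single k]
          · simp [hk]
          · intro i _ hik
            have hik' : (i:ℕ) ≠ n - 1 := by
              intro hh
              apply hik
              apply Fin.ext
              rw [hh, hk]
            simp [hik']
          · simp
  have hφ0 : (φ 0).eval z = (κ 0 : ℂ) := by
    have h2 : φ 0 = C ((φ 0).coeff 0) :=
      Polynomial.eq_C_of_degree_le_zero (le_of_eq (hON.1 0))
    rw [phi_coeff_self mu φ κ hON 0] at h2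
    rw [h2]
    simp
  have hφn : (φ n).eval z ≠ 0 := by
    intro h0
    have h1 := hveq ⟨0, by omega⟩
    rw [h0] at h1
    simp only [mul_zero, zero_mul] at h1
    have : v ⟨0, by omega⟩ = (κ 0 : ℂ) := by
      rw [hv]
      exact hφ0
    rw [this] at h1
    have : (κ 0 : ℂ) ≠ 0 := by exact_mod_cast (hON.2.1 0).ne'
    exact this h1
  have hκn : ((κ n : ℂ)) ≠ 0 := by exact_mod_cast (hON.2.1 n).ne'
  have hκn1 : ((κ (n-1) : ℂ)) ≠ 0 := by exact_mod_cast (hON.2.1 (n-1)).ne'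
  have hφn1 : (φ (n-1)).eval z = (c * (φ n).eval z) * B⁻¹ k k := by
    have := hveq k
    rwa [show v k = (φ (n-1)).eval z from by rw [hv]] at this
  have hmain : (((κ (n - 1) : ℂ))⁻¹ * (φ (n - 1)).eval z) / (((κ n : ℂ))⁻¹ * (φ n).eval z)
      = B⁻¹ k k := by
    rw [hφn1, hc]
    field_simp
  exact ⟨hmain, hmain.trans (hser k)⟩
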